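/- Let X₁,…,X_n (n ≥ 2) be i.i.d. random vectors in ℝⁿ such that X₁,…,X_{n−1} are linearly independent almost surely, and set Y = ∧(X₁,…,X_{n−1}) / ‖∧(X₁,…,X_{n−1})‖_∞. Then Y ∈ C_{n−1}(Y) almost surely. -/

import Mathlib

open MeasureTheory Filter Matrix Metric Set

/-- The generalized cross product of `m` vectors in `ℝ^(m+1)`: its `i`-th component is
the determinant of the matrix whose first row is the `i`-th standard basis vector and
whose remaining rows are `x 0, …, x (m-1)`. -/
noncomputable def gcross {m : ℕ} (x : Fin m → (Fin (m + 1) → ℝ)) : Fin (m + 1) → ℝ :=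
  fun i => (Matrix.of (Fin.cons (Pi.single i 1) x)).det

/-- `Y = ∧(X₁,…,X_{n-1}) / ‖∧(X₁,…,X_{n-1})‖_∞`; here `ℝⁿ = Fin (m+1) → ℝ` carries
the sup norm as its norm. -/
noncomputable def Yvec {Ω : Type*} {m : ℕ} (X : Fin (m + 1) → Ω → (Fin (m + 1) → ℝ))
    (ω : Ω) : Fin (m + 1) → ℝ :=
  (‖gcross fun j => X (Fin.castSucc j) ω‖)⁻¹ • gcross fun j => X (Fin.castSucc j) ω

lemma gcross_dot {m : ℕ} (x : Fin m → (Fin (m + 1) → ℝ)) (v : Fin (m + 1) → ℝ) :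
    (Matrix.of (Fin.cons v x)).det = ∑ i, v i * gcross x i := by
  classical
  let L := (Matrix.detRowAlternating (n := Fin (m+1)) (R := ℝ)).toMultilinearMap.toLinearMap
      (Fin.cons 0 x) 0
  have hL : ∀ w : Fin (m+1) → ℝ, (Matrix.of (Fin.cons w x)).det = L w := by
    intro w
    show _ = Matrix.detRowAlternating (Function.update (Fin.cons 0 x) 0 w)
    rw [Fin.update_cons_zero]
    rfl
  have hv : v = ∑ i, v i • Pi.single (M := fun _ : Fin (m+1) => ℝ) i 1 := by
    funext j
    simp [Pi.single_apply, Finset.sum_apply, mul_ite]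
  have hg : ∀ i, gcross x i = L (Pi.single i 1) := fun i => hL (Pi.single i 1)
  calc (Matrix.of (Fin.cons v x)).det = L v := hL v
    _ = L (∑ i, v i • Pi.single (M := fun _ : Fin (m+1) => ℝ) i 1) := by rw [← hv]
    _ = ∑ i, v i * gcross x i := by
        rw [map_sum]
        simp only [_root_.map_smul, smul_eq_mul, hg]

lemma gcross_ne_zero {m : ℕ} {x : Fin m → (Fin (m + 1) → ℝ)}
    (hx : LinearIndependent ℝ x) : gcross x ≠ 0 := by
  classical
  have hspan : Submodule.span ℝ (Set.range x) ≠ ⊤ := by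
    intro h
    have hb : Module.finrank ℝ (Fin (m+1) → ℝ) = m := by
      rw [Module.finrank_eq_card_basis (Module.Basis.mk hx (by rw [h]))]
      simp
    simp [Module.finrank_fin_fun] at hb
  obtain ⟨v, hv⟩ : ∃ v, v ∉ Submodule.span ℝ (Set.range x) := by
    by_contra h
    push_neg at h
    exact hspan (Submodule.eq_top_iff'.2 h)
  have hcons : LinearIndependent ℝ (Fin.cons v x) :=
    (linearIndependent_fin_cons).2 ⟨hx, hv⟩
  have hunit : IsUnit (Matrix.of (Fin.cons v x)) :=
    Matrix.linearIndependent_rows_iff_isUnit.1 hcons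
  have hdet : (Matrix.of (Fin.cons v x)).det ≠ 0 :=
    (Matrix.isUnit_iff_isUnit_det _).1 hunit |>.ne_zero
  intro h0
  apply hdet
  rw [gcross_dot, h0]
  simp

lemma core_null {k : ℕ} (ρ : Measure (Fin k → ℝ)) [IsFiniteMeasure ρ] :
    ρ {x | liminf (fun ε : ℝ => ρ (closedBall x (ε / 2)) / ENNReal.ofReal (ε ^ k))
        (nhdsWithin 0 (Set.Ioi 0)) = 0} = 0 := by
  set bad := {x | liminf (fun ε : ℝ => ρ (closedBall x (ε / 2)) / ENNReal.ofReal (ε ^ k))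
        (nhdsWithin 0 (Set.Ioi 0)) = 0} with hbad
  have main : ∀ n : ℕ, ρ (bad ∩ closedBall 0 n) = 0 := by
    intro n
    have hC : volume (closedBall (0 : Fin k → ℝ) (n + 1)) ≠ ⊤ :=
      (measure_closedBall_lt_top).ne
    have key : ∀ δ : ℝ, 0 < δ →
        ρ (bad ∩ closedBall 0 n) ≤ ENNReal.ofReal δ * volume (closedBall (0 : Fin k → ℝ) (n + 1)) := by
      intro δ hδ
      set f : (Fin k → ℝ) → Set ℝ := fun x =>
        {r | 0 < r ∧ ρ (closedBall x r) ≤ ENNReal.ofReal δ * ENNReal.ofReal ((2 * r) ^ k)} with hf'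
      have hf : ∀ x ∈ bad ∩ closedBall 0 n, ∀ η > 0, (f x ∩ Ioo 0 η).Nonempty := by
        intro x hx η hη
        have hfreq : ∃ᶠ ε in nhdsWithin (0:ℝ) (Set.Ioi 0),
            ρ (closedBall x (ε / 2)) / ENNReal.ofReal (ε ^ k) < ENNReal.ofReal δ := by
          have h0 : liminf (fun ε : ℝ => ρ (closedBall x (ε / 2)) / ENNReal.ofReal (ε ^ k))
              (nhdsWithin 0 (Set.Ioi 0)) = 0 := hx.1
          apply frequently_lt_of_liminf_lt (by isBoundedDefault)
          rw [h0]
          exact ENNReal.ofReal_pos.2 hδ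
        obtain ⟨ε, hlt, hε1, hε2⟩ :=
          (hfreq.and_eventually (Ioo_mem_nhdsGT_of_mem ⟨le_refl 0, (by linarith : (0:ℝ) < 2 * η)⟩)).exists
        have hε0 : (0:ℝ) < ε := hε1
        refine ⟨ε / 2, ⟨by linarith, ?_⟩, by constructor <;> linarith⟩
        have hb0 : ENNReal.ofReal (ε ^ k) ≠ 0 := by
          simp [ENNReal.ofReal_eq_zero, not_le, pow_pos hε0]
        have h2 : 2 * (ε / 2) = ε := by ring
        rw [h2]
        exact ((ENNReal.div_lt_iff (Or.inl hb0) (Or.inl ENNReal.ofReal_ne_top)).1 hlt).le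
      obtain ⟨t, r, t_count, ts, hr, hcov, hdisj⟩ :=
        Besicovitch.exists_disjoint_closedBall_covering_ae ρ f (bad ∩ closedBall 0 n) hf
          (fun _ => 1) (fun _ _ => one_pos)
      have hsub : (bad ∩ closedBall 0 n) ⊆
          ((bad ∩ closedBall 0 n) \ ⋃ x ∈ t, closedBall x (r x)) ∪ ⋃ x ∈ t, closedBall x (r x) :=
        fun x hx => by by_cases h : x ∈ ⋃ x ∈ t, closedBall x (r x) <;> simp [h, hx]
      calc ρ (bad ∩ closedBall 0 n)
          ≤ ρ (((bad ∩ closedBall 0 n) \ ⋃ x ∈ t, closedBall x (r x)) ∪ ⋃ x ∈ t, closedBall x (r x)) :=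
            measure_mono hsub
        _ ≤ ρ ((bad ∩ closedBall 0 n) \ ⋃ x ∈ t, closedBall x (r x)) + ρ (⋃ x ∈ t, closedBall x (r x)) :=
            measure_union_le _ _
        _ = ρ (⋃ x ∈ t, closedBall x (r x)) := by rw [hcov, zero_add]
        _ ≤ ∑' x : t, ρ (closedBall x (r x)) := measure_biUnion_le ρ t_count _
        _ ≤ ∑' x : t, ENNReal.ofReal δ * volume (closedBall (x : Fin k → ℝ) (r x)) := by
            apply ENNReal.tsum_le_tsum
            intro x
            have hrx := hr x x.2
            have h1 : ρ (closedBall (x : Fin k → ℝ) (r x)) ≤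
                ENNReal.ofReal δ * ENNReal.ofReal ((2 * r x) ^ k) := hrx.1.2
            rw [Real.volume_pi_closedBall _ hrx.2.1.le, Fintype.card_fin]
            exact h1
        _ = ENNReal.ofReal δ * ∑' x : t, volume (closedBall (x : Fin k → ℝ) (r x)) :=
            ENNReal.tsum_mul_left
        _ = ENNReal.ofReal δ * volume (⋃ x ∈ t, closedBall x (r x)) := by
            rw [measure_biUnion t_count hdisj (fun x _ => measurableSet_closedBall)]
        _ ≤ ENNReal.ofReal δ * volume (closedBall (0 : Fin k → ℝ) (n + 1)) := by
            gcongr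
            apply iUnion₂_subset
            intro x hx
            apply closedBall_subset_closedBall'
            have h1 : dist x 0 ≤ (n : ℝ) := (ts hx).2
            have h2 : r x ≤ 1 := (hr x hx).2.2.le
            linarith
    refine le_antisymm ?_ zero_le
    have htend : Tendsto (fun δ : ℝ => ENNReal.ofReal δ * volume (closedBall (0 : Fin k → ℝ) (n + 1)))
        (nhdsWithin 0 (Set.Ioi 0)) (nhds 0) := by
      have h0 : Tendsto (fun δ : ℝ => ENNReal.ofReal δ) (nhdsWithin 0 (Set.Ioi 0)) (nhds 0) := by
        have := (ENNReal.continuous_ofReal.tendsto 0).mono_left (nhdsWithin_le_nhds (s := Set.Ioi (0:ℝ)))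
        simpa using this
      simpa using ENNReal.Tendsto.mul_const h0 (Or.inr hC)
    exact ge_of_tendsto htend (eventually_nhdsWithin_of_forall fun δ hδ => key δ hδ)
  have : bad ⊆ ⋃ n : ℕ, bad ∩ closedBall 0 n := by
    intro x hx
    obtain ⟨n, hn⟩ := exists_nat_ge (dist x 0)
    exact mem_iUnion.2 ⟨n, hx, mem_closedBall.2 hn⟩
  exact measure_mono_null this (measure_iUnion_null main)

lemma face_null {m : ℕ} (ν : Measure (Fin (m + 1) → ℝ)) [IsFiniteMeasure ν]
    (i : Fin (m + 1)) (c : ℝ) :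
    ν ({z | liminf (fun ε : ℝ => ν (ball z ε) / ENNReal.ofReal (ε ^ m))
        (nhdsWithin 0 (Set.Ioi 0)) = 0} ∩ {z | z i = c}) = 0 := by
  set π : (Fin (m + 1) → ℝ) → (Fin m → ℝ) := fun z j => z (i.succAbove j) with hπ
  have hπm : Measurable π := measurable_pi_lambda _ fun j => measurable_pi_apply _
  have hH : MeasurableSet {z : Fin (m + 1) → ℝ | z i = c} :=
    (measurableSet_singleton c).preimage (measurable_pi_apply i)
  set ρ : Measure (Fin m → ℝ) := (ν.restrict {z | z i = c}).map π with hρ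
  haveI : IsFiniteMeasure ρ := by
    constructor
    rw [hρ, Measure.map_apply hπm MeasurableSet.univ, Measure.restrict_apply' hH]
    exact (measure_mono (inter_subset_right)).trans_lt (measure_lt_top ν _)
  have key : ({z | liminf (fun ε : ℝ => ν (ball z ε) / ENNReal.ofReal (ε ^ m))
        (nhdsWithin 0 (Set.Ioi 0)) = 0} ∩ {z | z i = c}) ⊆
      {z | z i = c} ∩ π ⁻¹' {x | liminf (fun ε : ℝ => ρ (closedBall x (ε / 2)) / ENNReal.ofReal (ε ^ m))
        (nhdsWithin 0 (Set.Ioi 0)) = 0} := by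
    rintro z ⟨hz1, hz2⟩
    refine ⟨hz2, ?_⟩
    have mono : ∀ ε : ℝ, ε ∈ Set.Ioi (0:ℝ) → ρ (closedBall (π z) (ε / 2)) ≤ ν (ball z ε) := by
      intro ε hε
      have hε' : (0:ℝ) < ε := hε
      rw [hρ, Measure.map_apply hπm measurableSet_closedBall, Measure.restrict_apply' hH]
      apply measure_mono
      rintro w ⟨hw1, hw2⟩
      have hdw : dist w z ≤ ε / 2 := by
        rw [dist_pi_le_iff (by linarith)]
        intro b
        rcases eq_or_ne b i with rfl | hb
        · have : w b = c := hw2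
          have h2 : z b = c := hz2
          rw [this, h2, dist_self]
          linarith
        · obtain ⟨j, rfl⟩ := Fin.exists_succAbove_eq hb
          calc dist (w (i.succAbove j)) (z (i.succAbove j)) = dist (π w j) (π z j) := rfl
            _ ≤ dist (π w) (π z) := dist_le_pi_dist _ _ _
            _ ≤ ε / 2 := hw1
      have : dist w z < ε := by linarith
      exact this
    have hle : liminf (fun ε : ℝ => ρ (closedBall (π z) (ε / 2)) / ENNReal.ofReal (ε ^ m))
          (nhdsWithin 0 (Set.Ioi 0)) ≤
        liminf (fun ε : ℝ => ν (ball z ε) / ENNReal.ofReal (ε ^ m)) (nhdsWithin 0 (Set.Ioi 0)) := by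
      exact liminf_le_liminf
        (eventually_nhdsWithin_of_forall fun ε hε => ENNReal.div_le_div_right (mono ε hε) _)
    have hz1' : liminf (fun ε : ℝ => ν (ball z ε) / ENNReal.ofReal (ε ^ m))
        (nhdsWithin 0 (Set.Ioi 0)) = 0 := hz1
    exact le_antisymm (hz1' ▸ hle) zero_le
  refine le_antisymm ?_ zero_le
  calc ν _ ≤ ν ({z | z i = c} ∩ π ⁻¹' {x | liminf (fun ε : ℝ =>
          ρ (closedBall x (ε / 2)) / ENNReal.ofReal (ε ^ m)) (nhdsWithin 0 (Set.Ioi 0)) = 0}) :=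
        measure_mono key
    _ = (ν.restrict {z | z i = c}) (π ⁻¹' {x | liminf (fun ε : ℝ =>
          ρ (closedBall x (ε / 2)) / ENNReal.ofReal (ε ^ m)) (nhdsWithin 0 (Set.Ioi 0)) = 0}) := by
        rw [Measure.restrict_apply' hH, inter_comm]
    _ ≤ ρ {x | liminf (fun ε : ℝ => ρ (closedBall x (ε / 2)) / ENNReal.ofReal (ε ^ m))
          (nhdsWithin 0 (Set.Ioi 0)) = 0} := Measure.le_map_apply hπm.aemeasurable _
    _ = 0 := core_null ρ

lemma measurable_gcrossX {Ω : Type*} [MeasurableSpace Ω] {m : ℕ}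
    (X : Fin (m + 1) → Ω → (Fin (m + 1) → ℝ)) (hmeas : ∀ i, Measurable (X i)) :
    Measurable (fun ω => gcross fun j => X (Fin.castSucc j) ω) := by
  apply measurable_pi_lambda
  intro i
  have hmat : Measurable fun ω =>
      ((Fin.cons (Pi.single i 1) fun j => X (Fin.castSucc j) ω) :
        Fin (m + 1) → Fin (m + 1) → ℝ) := by
    apply measurable_pi_lambda
    intro a
    refine Fin.cases ?_ ?_ a
    · simpa using measurable_const
    · intro j
      simpa using hmeas (Fin.castSucc j)
  have hdet : Continuous fun g : Fin (m + 1) → Fin (m + 1) → ℝ => (Matrix.of g).det :=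
    Continuous.matrix_det continuous_id
  exact (hdet.measurable).comp hmat

lemma measurable_Yvec {Ω : Type*} [MeasurableSpace Ω] {m : ℕ}
    (X : Fin (m + 1) → Ω → (Fin (m + 1) → ℝ)) (hmeas : ∀ i, Measurable (X i)) :
    Measurable (Yvec X) := by
  have hg := measurable_gcrossX X hmeas
  exact (hg.norm.inv).smul hg

theorem Yvec_ae_mem_mould {Ω : Type*} [MeasurableSpace Ω]
    (μ : Measure Ω) [IsProbabilityMeasure μ] {m : ℕ} (hm : 1 ≤ m)
    (X : Fin (m + 1) → Ω → (Fin (m + 1) → ℝ))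
    (hmeas : ∀ i, Measurable (X i))
    (hindep : ProbabilityTheory.iIndepFun X μ)
    (hident : ∀ i, μ.map (X i) = μ.map (X 0))
    (hli : ∀ᵐ ω ∂μ, LinearIndependent ℝ (fun j : Fin m => X (Fin.castSucc j) ω)) :
    μ {ω | 0 < Filter.liminf
        (fun ε : ℝ => μ {ω' | ‖Yvec X ω' - Yvec X ω‖ < ε} / ENNReal.ofReal (ε ^ m))
        (nhdsWithin 0 (Set.Ioi 0))} = 1 := by
  classical
  have hY : Measurable (Yvec X) := measurable_Yvec X hmeas
  set ν : Measure (Fin (m + 1) → ℝ) := μ.map (Yvec X) with hν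
  haveI : IsFiniteMeasure ν := by
    constructor
    rw [hν, Measure.map_apply hY MeasurableSet.univ]
    exact measure_lt_top μ _
  have hball : ∀ (z : Fin (m + 1) → ℝ) (ε : ℝ),
      μ {ω' | ‖Yvec X ω' - z‖ < ε} = ν (ball z ε) := by
    intro z ε
    rw [hν, Measure.map_apply hY measurableSet_ball]
    congr 1
  set bad : Set (Fin (m + 1) → ℝ) :=
    {z | liminf (fun ε : ℝ => ν (ball z ε) / ENNReal.ofReal (ε ^ m))
      (nhdsWithin 0 (Set.Ioi 0)) = 0} with hbaddef
  -- the bad set is ν-null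
  have hS : ν {z : Fin (m + 1) → ℝ | ‖z‖ ≠ 1} = 0 := by
    have hSm : MeasurableSet {z : Fin (m + 1) → ℝ | ‖z‖ = 1} :=
      (isClosed_eq continuous_norm continuous_const).measurableSet
    rw [hν, show {z : Fin (m + 1) → ℝ | ‖z‖ ≠ 1} = {z : Fin (m + 1) → ℝ | ‖z‖ = 1}ᶜ from rfl,
      Measure.map_apply hY hSm.compl]
    apply measure_mono_null (fun ω hω => ?_) (ae_iff.1 hli)
    intro hLI
    apply hω
    have hg : gcross (fun j => X (Fin.castSucc j) ω) ≠ 0 := gcross_ne_zero hLI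
    show ‖Yvec X ω‖ = 1
    exact norm_smul_inv_norm (𝕜 := ℝ) hg
  have hbadnull : ν bad = 0 := by
    have hsplit : bad ⊆ {z : Fin (m + 1) → ℝ | ‖z‖ ≠ 1} ∪
        ⋃ i : Fin (m + 1), ((bad ∩ {z | z i = 1}) ∪ (bad ∩ {z | z i = (-1 : ℝ)})) := by
      intro z hz
      by_cases h1 : ‖z‖ = 1
      · right
        obtain ⟨i, -, hi⟩ := Finset.exists_mem_eq_sup (Finset.univ : Finset (Fin (m + 1)))
          Finset.univ_nonempty (fun i => ‖z i‖₊)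
        have hzi : ‖z i‖ = 1 := by
          have : ‖z‖₊ = ‖z i‖₊ := by rw [Pi.nnnorm_def, hi]
          have h2 : ‖z‖ = ‖z i‖ := congrArg NNReal.toReal this
          rw [← h2, h1]
        have habs : |z i| = 1 := by rwa [Real.norm_eq_abs] at hzi
        rcases (abs_eq (zero_le_one)).1 habs with h | h
        · exact mem_iUnion.2 ⟨i, Or.inl ⟨hz, h⟩⟩
        · exact mem_iUnion.2 ⟨i, Or.inr ⟨hz, h⟩⟩
      · exact Or.inl h1
    refine measure_mono_null hsplit (measure_union_null hS (measure_iUnion_null fun i => ?_))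
    exact measure_union_null (face_null ν i 1) (face_null ν i (-1))
  have hcompl : μ {ω | ¬ (0 < liminf
      (fun ε : ℝ => μ {ω' | ‖Yvec X ω' - Yvec X ω‖ < ε} / ENNReal.ofReal (ε ^ m))
      (nhdsWithin 0 (Set.Ioi 0)))} = 0 := by
    have hsub : {ω | ¬ (0 < liminf
        (fun ε : ℝ => μ {ω' | ‖Yvec X ω' - Yvec X ω‖ < ε} / ENNReal.ofReal (ε ^ m))
        (nhdsWithin 0 (Set.Ioi 0)))} ⊆ Yvec X ⁻¹' bad := by
      intro ω hω
      have h0 : liminf (fun ε : ℝ => μ {ω' | ‖Yvec X ω' - Yvec X ω‖ < ε} / ENNReal.ofReal (ε ^ m))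
          (nhdsWithin 0 (Set.Ioi 0)) = 0 := by
        simpa [pos_iff_ne_zero, not_not] using hω
      show liminf (fun ε : ℝ => ν (ball (Yvec X ω) ε) / ENNReal.ofReal (ε ^ m))
          (nhdsWithin 0 (Set.Ioi 0)) = 0
      rw [show (fun ε : ℝ => ν (ball (Yvec X ω) ε) / ENNReal.ofReal (ε ^ m)) =
          fun ε : ℝ => μ {ω' | ‖Yvec X ω' - Yvec X ω‖ < ε} / ENNReal.ofReal (ε ^ m) from
        funext fun ε => by rw [hball]]
      exact h0
    exact measure_mono_null hsub ((Measure.le_map_apply hY.aemeasurable bad).trans_eq hbadnull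
      |>.antisymm zero_le)
  refine le_antisymm prob_le_one ?_
  calc (1 : ENNReal) = μ univ := measure_univ.symm
    _ = μ ({ω | 0 < liminf
          (fun ε : ℝ => μ {ω' | ‖Yvec X ω' - Yvec X ω‖ < ε} / ENNReal.ofReal (ε ^ m))
          (nhdsWithin 0 (Set.Ioi 0))} ∪ {ω | 0 < liminf
          (fun ε : ℝ => μ {ω' | ‖Yvec X ω' - Yvec X ω‖ < ε} / ENNReal.ofReal (ε ^ m))
          (nhdsWithin 0 (Set.Ioi 0))}ᶜ) := by rw [union_compl_self]
    _ ≤ μ {ω | 0 < liminf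
          (fun ε : ℝ => μ {ω' | ‖Yvec X ω' - Yvec X ω‖ < ε} / ENNReal.ofReal (ε ^ m))
          (nhdsWithin 0 (Set.Ioi 0))} + μ {ω | 0 < liminf
          (fun ε : ℝ => μ {ω' | ‖Yvec X ω' - Yvec X ω‖ < ε} / ENNReal.ofReal (ε ^ m))
          (nhdsWithin 0 (Set.Ioi 0))}ᶜ := measure_union_le _ _
    _ = μ {ω | 0 < liminf
          (fun ε : ℝ => μ {ω' | ‖Yvec X ω' - Yvec X ω‖ < ε} / ENNReal.ofReal (ε ^ m))
          (nhdsWithin 0 (Set.Ioi 0))} := by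
        rw [compl_setOf]
        rw [hcompl, add_zero]
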